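/- Let 0 < t ≤ t′ be reals, n ≥ 1, and let s₁, …, sₙ be complex numbers such that every partial sum s_i + s_{i+1} + ⋯ + s_j (1 ≤ i ≤ j ≤ n) is nonzero. Then ∫_{t ≤ t₁ ≤ ⋯ ≤ tₙ ≤ t′} t₁^{s₁−1} ⋯ tₙ^{sₙ−1} dt₁⋯dtₙ = Σ_{k=0}^{n} (−1)^k · (t′)^{s_{k+1}+⋯+sₙ} / (s_{k+1}(s_{k+1}+s_{k+2})⋯(s_{k+1}+⋯+sₙ)) · t^{s₁+⋯+s_k} / (s_k(s_k+s_{k−1})⋯(s_k+⋯+s₁)), where an empty product of denominators is 1 and an empty exponent sum is 0. -/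

import Mathlib

open MeasureTheory

namespace Stmt15

/-- The simplex `{t ≤ u₁ ≤ ⋯ ≤ uₙ ≤ t'}` in `ℝⁿ`. -/
def simplex (n : ℕ) (t t' : ℝ) : Set (Fin n → ℝ) :=
  {u | (∀ i j : Fin n, i ≤ j → u i ≤ u j) ∧ ∀ i, t ≤ u i ∧ u i ≤ t'}

lemma isClosed_simplex (n : ℕ) (t t' : ℝ) : IsClosed (simplex n t t') := by
  have : simplex n t t' =
      (⋂ i, ⋂ j, ⋂ _ : i ≤ j, {u : Fin n → ℝ | u i ≤ u j}) ∩
      ((⋂ i, {u : Fin n → ℝ | t ≤ u i}) ∩ ⋂ i, {u : Fin n → ℝ | u i ≤ t'}) := by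
    ext u
    constructor
    · rintro ⟨h1, h2⟩
      exact ⟨Set.mem_iInter.2 fun i => Set.mem_iInter.2 fun j => Set.mem_iInter.2 fun h => h1 i j h,
        Set.mem_iInter.2 fun i => (h2 i).1, Set.mem_iInter.2 fun i => (h2 i).2⟩
    · rintro ⟨h1, h2, h3⟩
      refine ⟨fun i j h => Set.mem_iInter.1 (Set.mem_iInter.1 (Set.mem_iInter.1 h1 i) j) h,
        fun i => ⟨Set.mem_iInter.1 h2 i, Set.mem_iInter.1 h3 i⟩⟩
  rw [this]
  exact ((isClosed_iInter fun i => isClosed_iInter fun j => isClosed_iInter fun _ =>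
    isClosed_le (continuous_apply i) (continuous_apply j)).inter
    ((isClosed_iInter fun i => isClosed_le continuous_const (continuous_apply i)).inter
     (isClosed_iInter fun i => isClosed_le (continuous_apply i) continuous_const)))

lemma isCompact_simplex (n : ℕ) (t t' : ℝ) : IsCompact (simplex n t t') := by
  refine IsCompact.of_isClosed_subset (isCompact_Icc (a := fun _ : Fin n => t)
    (b := fun _ => t')) (isClosed_simplex n t t') ?_
  intro u hu
  exact ⟨fun i => (hu.2 i).1, fun i => (hu.2 i).2⟩

lemma continuousOn_integrand (n : ℕ) (c : ℕ → ℂ) {t t' : ℝ} (ht : 0 < t) :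
    ContinuousOn (fun u : Fin n → ℝ => ∏ i : Fin n, (u i : ℂ) ^ (c i.1))
      (simplex n t t') := by
  refine continuousOn_finset_prod Finset.univ fun i _ => ?_
  intro u hu
  refine ContinuousAt.continuousWithinAt ?_
  have hui : u i ≠ 0 := (lt_of_lt_of_le ht (hu.2 i).1).ne'
  have h1 : ContinuousAt (fun x : ℝ => (x : ℂ) ^ (c i.1)) (u i) :=
    Complex.continuousAt_ofReal_cpow_const (u i) (c i.1) (Or.inr hui)
  exact ContinuousAt.comp (x := u) h1 (continuous_apply i).continuousAt

lemma integrableOn_integrand (n : ℕ) (c : ℕ → ℂ) {t t' : ℝ} (ht : 0 < t) :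
    IntegrableOn (fun u : Fin n → ℝ => ∏ i : Fin n, (u i : ℂ) ^ (c i.1))
      (simplex n t t') := by
  exact (continuousOn_integrand n c ht).integrableOn_compact (isCompact_simplex n t t')

lemma integral_Icc_cpow {a b : ℝ} (ha : 0 < a) (hab : a ≤ b) {r : ℂ} (hr : r ≠ 0) :
    (∫ x in Set.Icc a b, (x : ℂ) ^ (r - 1)) = ((b : ℂ) ^ r - (a : ℂ) ^ r) / r := by
  rw [MeasureTheory.integral_Icc_eq_integral_Ioc, ← intervalIntegral.integral_of_le hab,
    integral_cpow (Or.inr ⟨by simpa [sub_eq_iff_eq_add] using hr, fun h => ?_⟩)]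
  · rw [sub_add_cancel]
  · rw [Set.uIcc_of_le hab] at h
    exact absurd h.1 (not_le.mpr ha)

noncomputable def rhs (t t' : ℝ) (s : ℕ → ℂ) (n : ℕ) : ℂ :=
  ∑ k ∈ Finset.range (n + 1),
    (-1 : ℂ) ^ k *
      ((t' : ℂ) ^ (∑ j ∈ Finset.Ico k n, s j) /
        ∏ j ∈ Finset.Ico k n, ∑ l ∈ Finset.Icc k j, s l) *
      ((t : ℂ) ^ (∑ j ∈ Finset.range k, s j) /
        ∏ j ∈ Finset.range k, ∑ l ∈ Finset.Icc j (k - 1), s l)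

lemma sum_Ico_update_top (s : ℕ → ℂ) (m k : ℕ) (hk : k ≤ m) :
    ∑ l ∈ Finset.Ico k (m+1), Function.update s m (s m + s (m+1)) l
      = ∑ l ∈ Finset.Ico k (m+2), s l := by
  rw [Finset.sum_Ico_succ_top hk, Finset.sum_Ico_succ_top (Nat.le_succ_of_le hk),
    Finset.sum_Ico_succ_top hk,
    Finset.sum_congr rfl (fun j hj => Function.update_of_ne
      (Nat.ne_of_lt (Finset.mem_Ico.1 hj).2) _ s),
    Function.update_self, add_assoc]

lemma sum_Ico_update_lt (s : ℕ → ℂ) (m a b : ℕ) (hb : b ≤ m) :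
    ∑ l ∈ Finset.Ico a b, Function.update s m (s m + s (m+1)) l
      = ∑ l ∈ Finset.Ico a b, s l :=
  Finset.sum_congr rfl fun l hl => Function.update_of_ne
    (by have := (Finset.mem_Ico.1 hl).2; omega) _ s

lemma key_frac {E X Y W C P N : ℂ} (hC : C ≠ 0) (hP : P ≠ 0) (hN : N ≠ 0)
    (hPN : P + N ≠ 0) :
    Y / N * (E * (X / (C * P)) * W) - 1 / N * (E * (X * Y / (C * (P + N))) * W)
      = E * (X * Y / (C * P * (P + N))) * W := by
  field_simp
  ring

lemma rhs_rec (t t' : ℝ) (ht' : (t' : ℂ) ≠ 0) (m : ℕ) (s : ℕ → ℂ)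
    (hs : ∀ i j : ℕ, i ≤ j → j < m + 2 → (∑ l ∈ Finset.Icc i j, s l) ≠ 0) :
    (t' : ℂ) ^ (s (m + 1)) / s (m + 1) * rhs t t' s (m + 1)
      - 1 / s (m + 1) * rhs t t' (Function.update s m (s m + s (m + 1))) (m + 1)
      = rhs t t' s (m + 2) := by
  have hs' : ∀ i j : ℕ, i ≤ j → j < m + 2 → (∑ l ∈ Finset.Ico i (j+1), s l) ≠ 0 := by
    intro i j hij hj
    rw [Finset.Ico_add_one_right_eq_Icc]; exact hs i j hij hj
  set s'' := Function.update s m (s m + s (m + 1)) with hs''def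
  have hsN : s (m+1) ≠ 0 := by simpa using hs (m+1) (m+1) le_rfl (by omega)
  simp only [rhs, ← Finset.Ico_add_one_right_eq_Icc, Nat.succ_eq_add_one]
  rw [Finset.mul_sum, Finset.mul_sum, ← Finset.sum_sub_distrib,
    Finset.sum_range_succ (n := m+2), Finset.sum_range_succ (n := m+1),
    Finset.sum_range_succ (n := m+1), add_assoc]
  congr 1
  · -- termwise, k ≤ m
    refine Finset.sum_congr rfl fun k hk => ?_
    have hk : k ≤ m := by simpa [Nat.lt_succ_iff] using hk
    set C := ∏ j ∈ Finset.Ico k m, ∑ l ∈ Finset.Ico k (j+1), s l with hC_def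
    set P := ∑ l ∈ Finset.Ico k (m+1), s l with hP_def
    set Q := ∑ l ∈ Finset.Ico k (m+2), s l with hQ_def
    have hC : C ≠ 0 := Finset.prod_ne_zero_iff.2 fun j hj =>
      hs' k j (Finset.mem_Ico.1 hj).1 (by have := (Finset.mem_Ico.1 hj).2; omega)
    have hP : P ≠ 0 := hs' k m hk (by omega)
    have hQ : Q ≠ 0 := hs' k (m+1) (by omega) (by omega)
    have hQP : Q = P + s (m+1) := by
      rw [hQ_def, hP_def, Finset.sum_Ico_succ_top (by omega : k ≤ m + 1)]
    have h1 : ∏ j ∈ Finset.Ico k (m+1), ∑ l ∈ Finset.Ico k (j+1), s l = C * P := by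
      rw [Finset.prod_Ico_succ_top hk]
    have h2 : ∏ j ∈ Finset.Ico k (m+2), ∑ l ∈ Finset.Ico k (j+1), s l = C * P * Q := by
      rw [Finset.prod_Ico_succ_top (by omega : k ≤ m + 1), Finset.prod_Ico_succ_top hk]
    have h3 : ∏ j ∈ Finset.Ico k (m+1), ∑ l ∈ Finset.Ico k (j+1), s'' l = C * Q := by
      rw [Finset.prod_Ico_succ_top hk, sum_Ico_update_top s m k hk,
        Finset.prod_congr rfl fun j hj =>
          sum_Ico_update_lt s m k (j+1) (by have := (Finset.mem_Ico.1 hj).2; omega)]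
    have h4 : ∑ j ∈ Finset.Ico k (m+1), s'' j = P + s (m+1) := by
      rw [sum_Ico_update_top s m k hk, ← hQP]
    have h5 : ∑ j ∈ Finset.range k, s'' j = ∑ j ∈ Finset.range k, s j :=
      Finset.sum_congr rfl fun j hj => Function.update_of_ne
        (by have := Finset.mem_range.1 hj; omega) _ s
    have h6 : ∏ j ∈ Finset.range k, ∑ l ∈ Finset.Ico j (k-1+1), s'' l
        = ∏ j ∈ Finset.range k, ∑ l ∈ Finset.Ico j (k-1+1), s l :=
      Finset.prod_congr rfl fun j hj =>
        sum_Ico_update_lt s m j (k-1+1) (by have := Finset.mem_range.1 hj; omega)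
    have hPN : P + s (m+1) ≠ 0 := by rw [← hQP]; exact hQ
    rw [h1, h2, h3, h4, h5, h6, hQP, Complex.cpow_add _ _ ht']
    exact key_frac hC hP hsN hPN
  · -- k = m+1 terms
    have e1 : Finset.Ico (m+1) (m+1) = (∅ : Finset ℕ) := Finset.Ico_self _
    have e2 : Finset.Ico (m+1) (m+2) = {m+1} := by
      rw [Nat.Ico_succ_singleton]
    have e3 : Finset.Ico (m+2) (m+2) = (∅ : Finset ℕ) := Finset.Ico_self _
    have hR : ∑ j ∈ Finset.range (m+1), s'' j = ∑ j ∈ Finset.range (m+2), s j := by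
      rw [Finset.sum_range_succ, Finset.sum_range_succ (n := m+1), Finset.sum_range_succ,
        Finset.sum_congr rfl (fun j hj => Function.update_of_ne
          (by have := Finset.mem_range.1 hj; omega) _ s),
        hs''def, Function.update_self, add_assoc]
    have hBB : ∏ j ∈ Finset.range (m+2), ∑ l ∈ Finset.Ico j (m+2-1+1), s l
        = (∏ j ∈ Finset.range (m+1), ∑ l ∈ Finset.Ico j (m+1-1+1), s'' l) * s (m+1) := by
      have h22 : m+2-1+1 = m+2 := by omega
      rw [h22, Finset.prod_range_succ]
      congr 1
      · refine Finset.prod_congr rfl fun j hj => ?_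
        have h11 : m+1-1+1 = m+1 := by omega
        rw [h11, sum_Ico_update_top s m j (by have := Finset.mem_range.1 hj; omega)]
      · rw [e2, Finset.sum_singleton]
    rw [hR, hBB]
    simp only [e1, e2, e3, Finset.prod_empty, Finset.sum_empty, Finset.prod_singleton,
      Finset.sum_singleton, Complex.cpow_zero, pow_succ, Nat.Ico_succ_singleton]
    ring

lemma indicator_comp_preimage {α β : Type*} (g : α → β) (S : Set β) (f : β → ℂ) (z : α) :
    (g ⁻¹' S).indicator (fun a => f (g a)) z = S.indicator f (g z) := by
  by_cases h : g z ∈ S <;> simp [Set.indicator_apply, h]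

lemma step (t t' : ℝ) (ht : 0 < t) (htt' : t ≤ t') (m : ℕ) (s : ℕ → ℂ)
    (hsN : s (m + 1) ≠ 0) :
    (∫ u in simplex (m + 2) t t', ∏ i : Fin (m + 2), (u i : ℂ) ^ (s i.1 - 1))
      = (t' : ℂ) ^ (s (m + 1)) / s (m + 1)
          * (∫ u in simplex (m + 1) t t', ∏ i : Fin (m + 1), (u i : ℂ) ^ (s i.1 - 1))
        - 1 / s (m + 1)
          * (∫ u in simplex (m + 1) t t',
              ∏ i : Fin (m + 1), (u i : ℂ) ^ (Function.update s m (s m + s (m + 1)) i.1 - 1)) := by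
  set s'' := Function.update s m (s m + s (m + 1)) with hs''def
  set f : (Fin (m + 2) → ℝ) → ℂ := fun u => ∏ i : Fin (m + 2), (u i : ℂ) ^ (s i.1 - 1)
    with hfdef
  set e := MeasurableEquiv.piFinSuccAbove (fun _ : Fin (m + 2) => ℝ) (Fin.last (m + 1))
    with hedef
  have hu1 : ∀ (x : ℝ) (y : Fin (m + 1) → ℝ),
      e.symm (x, y) (Fin.last (m + 1)) = x := by
    intro x y
    exact Fin.insertNth_apply_same (α := fun _ : Fin (m + 2) => ℝ) (Fin.last (m + 1)) x y
  have hu2 : ∀ (x : ℝ) (y : Fin (m + 1) → ℝ) (j : Fin (m + 1)),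
      e.symm (x, y) (Fin.castSucc j) = y j := by
    intro x y j
    have h := Fin.insertNth_apply_succAbove (α := fun _ : Fin (m + 2) => ℝ)
      (Fin.last (m + 1)) x y j
    rw [Fin.succAbove_last] at h
    exact h
  have hset : ∀ (x : ℝ) (y : Fin (m + 1) → ℝ),
      e.symm (x, y) ∈ simplex (m + 2) t t'
        ↔ y ∈ simplex (m + 1) t t' ∧ x ∈ Set.Icc (y (Fin.last m)) t' := by
    intro x y
    constructor
    · rintro ⟨hmono, hbd⟩
      have hyx : ∀ j : Fin (m + 1), y j ≤ x := by
        intro j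
        have h := hmono (Fin.castSucc j) (Fin.last (m + 1)) (Fin.le_last _)
        rwa [hu2, hu1] at h
      refine ⟨⟨fun i j hij => ?_, fun i => ?_⟩, hyx _, ?_⟩
      · have h := hmono (Fin.castSucc i) (Fin.castSucc j)
          (by rwa [Fin.castSucc_le_castSucc_iff])
        rwa [hu2, hu2] at h
      · have h := hbd (Fin.castSucc i); rwa [hu2] at h
      · have h := (hbd (Fin.last (m + 1))).2; rwa [hu1] at h
    · rintro ⟨⟨hymono, hybd⟩, hx1, hx2⟩
      constructor
      · intro i j hij
        rcases Fin.eq_castSucc_or_eq_last j with ⟨j', rfl⟩ | rfl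
        · rcases Fin.eq_castSucc_or_eq_last i with ⟨i', rfl⟩ | rfl
          · rw [hu2, hu2]
            exact hymono i' j' (by rwa [Fin.castSucc_le_castSucc_iff] at hij)
          · exact absurd (lt_of_le_of_lt hij (Fin.castSucc_lt_last j')) (lt_irrefl _)
        · rcases Fin.eq_castSucc_or_eq_last i with ⟨i', rfl⟩ | rfl
          · rw [hu2, hu1]
            exact le_trans (hymono i' (Fin.last m) (Fin.le_last _)) hx1
          · rw [hu1]
      · intro i
        rcases Fin.eq_castSucc_or_eq_last i with ⟨i', rfl⟩ | rfl
        · rw [hu2]; exact hybd i'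
        · rw [hu1]; exact ⟨le_trans (hybd (Fin.last m)).1 hx1, hx2⟩
  have hf : ∀ (x : ℝ) (y : Fin (m + 1) → ℝ),
      f (e.symm (x, y)) = (x : ℂ) ^ (s (m + 1) - 1)
        * ∏ j : Fin (m + 1), (y j : ℂ) ^ (s j.1 - 1) := by
    intro x y
    rw [hfdef]
    simp only [Fin.prod_univ_castSucc, hu1, hu2, Fin.coe_castSucc, Fin.val_last]
    ring
  have hS : MeasurableSet (simplex (m + 2) t t') := (isClosed_simplex _ _ _).measurableSet
  have hA : MeasurableSet (simplex (m + 1) t t') := (isClosed_simplex _ _ _).measurableSet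
  have hfint : IntegrableOn f (simplex (m + 2) t t') :=
    integrableOn_integrand (m + 2) (fun i => s i - 1) ht
  have mp := measurePreserving_piFinSuccAbove
    (fun _ : Fin (m + 2) => (volume : Measure ℝ)) (Fin.last (m + 1))
  have hpre : MeasurableSet (e.symm ⁻¹' simplex (m + 2) t t') := e.symm.measurable hS
  have hpi_int : Integrable ((simplex (m + 2) t t').indicator f) :=
    (integrable_indicator_iff hS).2 hfint
  have hg : Integrable (fun z : ℝ × (Fin (m + 1) → ℝ) =>
      ((simplex (m + 2) t t').indicator f) (e.symm z))
      ((volume : Measure ℝ).prod (volume : Measure (Fin (m + 1) → ℝ))) :=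
    (MeasurePreserving.integrable_comp_emb mp.symm e.symm.measurableEmbedding).mpr hpi_int
  have hinner : ∀ y : Fin (m + 1) → ℝ,
      (∫ x : ℝ, ((simplex (m + 2) t t').indicator f) (e.symm (x, y)))
        = (simplex (m + 1) t t').indicator
            (fun y => (∏ j : Fin (m + 1), (y j : ℂ) ^ (s j.1 - 1))
              * (((t' : ℂ) ^ (s (m + 1)) - ((y (Fin.last m) : ℝ) : ℂ) ^ (s (m + 1)))
                  / s (m + 1))) y := by
    intro y
    by_cases hy : y ∈ simplex (m + 1) t t'
    · have hxeq : ∀ x : ℝ, ((simplex (m + 2) t t').indicator f) (e.symm (x, y))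
          = (Set.Icc (y (Fin.last m)) t').indicator
              (fun x : ℝ => (x : ℂ) ^ (s (m + 1) - 1)
                * ∏ j : Fin (m + 1), (y j : ℂ) ^ (s j.1 - 1)) x := by
        intro x
        by_cases hx : x ∈ Set.Icc (y (Fin.last m)) t'
        · rw [Set.indicator_of_mem hx, Set.indicator_of_mem ((hset x y).2 ⟨hy, hx⟩), hf x y]
        · rw [Set.indicator_of_notMem hx,
            Set.indicator_of_notMem (fun h => hx ((hset x y).1 h).2)]
      rw [Set.indicator_of_mem hy]
      simp only [hxeq]
      have h0 : 0 < y (Fin.last m) := lt_of_lt_of_le ht (hy.2 _).1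
      have h1 : y (Fin.last m) ≤ t' := (hy.2 _).2
      rw [integral_indicator measurableSet_Icc, integral_mul_const,
        integral_Icc_cpow h0 h1 hsN]
      ring
    · rw [Set.indicator_of_notMem hy]
      have hz : ∀ x : ℝ, ((simplex (m + 2) t t').indicator f) (e.symm (x, y)) = 0 := fun x =>
        Set.indicator_of_notMem (fun h => hy ((hset x y).1 h).1) f
      simp only [hz, integral_zero]
  have hint1 : IntegrableOn (fun y : Fin (m + 1) → ℝ =>
      ∏ j : Fin (m + 1), (y j : ℂ) ^ (s j.1 - 1)) (simplex (m + 1) t t') :=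
    integrableOn_integrand (m + 1) (fun i => s i - 1) ht
  have hint2 : IntegrableOn (fun y : Fin (m + 1) → ℝ =>
      ∏ j : Fin (m + 1), (y j : ℂ) ^ (s'' j.1 - 1)) (simplex (m + 1) t t') :=
    integrableOn_integrand (m + 1) (fun i => s'' i - 1) ht
  have hc1 : Integrable (fun y : Fin (m + 1) → ℝ =>
      (t' : ℂ) ^ (s (m + 1)) / s (m + 1) * ∏ j : Fin (m + 1), (y j : ℂ) ^ (s j.1 - 1))
      (volume.restrict (simplex (m + 1) t t')) :=
    hint1.const_mul _
  have hc2 : Integrable (fun y : Fin (m + 1) → ℝ =>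
      1 / s (m + 1) * ∏ j : Fin (m + 1), (y j : ℂ) ^ (s'' j.1 - 1))
      (volume.restrict (simplex (m + 1) t t')) :=
    hint2.const_mul _
  calc
    ∫ u in simplex (m + 2) t t', f u
        = ∫ z in e.symm ⁻¹' simplex (m + 2) t t', f (e.symm z)
            ∂((volume : Measure ℝ).prod (volume : Measure (Fin (m + 1) → ℝ))) :=
      (MeasurePreserving.setIntegral_preimage_emb mp.symm e.symm.measurableEmbedding f _).symm
    _ = ∫ z, ((simplex (m + 2) t t').indicator f) (e.symm z)
            ∂((volume : Measure ℝ).prod (volume : Measure (Fin (m + 1) → ℝ))) := by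
      rw [← integral_indicator hpre]
      exact integral_congr_ae (Filter.Eventually.of_forall fun z =>
        indicator_comp_preimage e.symm (simplex (m + 2) t t') f z)
    _ = ∫ y, (∫ x : ℝ, ((simplex (m + 2) t t').indicator f) (e.symm (x, y))) :=
      integral_prod_symm _ hg
    _ = ∫ y in simplex (m + 1) t t',
          ((∏ j : Fin (m + 1), (y j : ℂ) ^ (s j.1 - 1))
            * (((t' : ℂ) ^ (s (m + 1)) - ((y (Fin.last m) : ℝ) : ℂ) ^ (s (m + 1)))
                / s (m + 1))) := by
      simp only [hinner]
      exact integral_indicator hA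
    _ = ∫ y in simplex (m + 1) t t',
          ((t' : ℂ) ^ (s (m + 1)) / s (m + 1)
              * ∏ j : Fin (m + 1), (y j : ℂ) ^ (s j.1 - 1)
            - 1 / s (m + 1) * ∏ j : Fin (m + 1), (y j : ℂ) ^ (s'' j.1 - 1)) := by
      refine setIntegral_congr_fun hA fun y hy => ?_
      have hy0 : ((y (Fin.last m) : ℝ) : ℂ) ≠ 0 := by
        exact_mod_cast (lt_of_lt_of_le ht (hy.2 _).1).ne'
      have hsplit : ∏ j : Fin (m + 1), (y j : ℂ) ^ (s'' j.1 - 1)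
          = (∏ j : Fin (m + 1), (y j : ℂ) ^ (s j.1 - 1))
            * ((y (Fin.last m) : ℝ) : ℂ) ^ (s (m + 1)) := by
        rw [Fin.prod_univ_castSucc, Fin.prod_univ_castSucc]
        have h1 : ∀ j : Fin m, s'' (Fin.castSucc j).1 = s (Fin.castSucc j).1 := fun j =>
          Function.update_of_ne (by have := j.2; simp only [Fin.coe_castSucc]; omega) _ s
        have h2 : s'' (Fin.last m).1 = s m + s (m + 1) := by
          rw [Fin.val_last, hs''def]; exact Function.update_self _ _ _
        have h3 : s m + s (m + 1) - 1 = (s m - 1) + s (m + 1) := by ring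
        rw [Finset.prod_congr rfl fun j _ => by rw [h1 j], h2, h3,
          Complex.cpow_add _ _ hy0, Fin.val_last]
        ring
      rw [hsplit]
      ring
    _ = (t' : ℂ) ^ (s (m + 1)) / s (m + 1)
          * (∫ u in simplex (m + 1) t t',
              ∏ i : Fin (m + 1), (u i : ℂ) ^ (s i.1 - 1))
        - 1 / s (m + 1)
          * (∫ u in simplex (m + 1) t t',
              ∏ i : Fin (m + 1), (u i : ℂ) ^ (s'' i.1 - 1)) := by
      rw [integral_sub hc1 hc2, integral_const_mul, integral_const_mul]

lemma base_case (t t' : ℝ) (ht : 0 < t) (htt' : t ≤ t') (s : ℕ → ℂ) (hs0 : s 0 ≠ 0) :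
    (∫ u in simplex 1 t t', ∏ i : Fin 1, (u i : ℂ) ^ (s i.1 - 1)) = rhs t t' s 1 := by
  have hpre : simplex 1 t t'
      = (MeasurableEquiv.funUnique (Fin 1) ℝ) ⁻¹' (Set.Icc t t') := by
    ext u
    constructor
    · rintro ⟨-, h2⟩
      exact ⟨(h2 default).1, (h2 default).2⟩
    · rintro ⟨h1, h2⟩
      exact ⟨fun i j _ => by rw [Subsingleton.elim i j],
        fun i => by rw [Subsingleton.elim i default]; exact ⟨h1, h2⟩⟩
  calc
    (∫ u in simplex 1 t t', ∏ i : Fin 1, (u i : ℂ) ^ (s i.1 - 1))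
        = ∫ u in (MeasurableEquiv.funUnique (Fin 1) ℝ) ⁻¹' (Set.Icc t t'),
            ((MeasurableEquiv.funUnique (Fin 1) ℝ) u : ℂ) ^ (s 0 - 1) := by
      rw [hpre]
      refine setIntegral_congr_fun ((measurableSet_Icc).preimage
        (MeasurableEquiv.funUnique (Fin 1) ℝ).measurable) fun u _ => ?_
      simp [Fin.prod_univ_one]
    _ = ∫ x in Set.Icc t t', (x : ℂ) ^ (s 0 - 1) :=
      (volume_preserving_funUnique (Fin 1) ℝ).setIntegral_preimage_emb
        (MeasurableEquiv.funUnique (Fin 1) ℝ).measurableEmbedding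
        (fun x : ℝ => (x : ℂ) ^ (s 0 - 1)) (Set.Icc t t')
    _ = ((t' : ℂ) ^ (s 0) - (t : ℂ) ^ (s 0)) / s 0 := integral_Icc_cpow ht htt' hs0
    _ = rhs t t' s 1 := by
      rw [rhs]
      rw [Finset.sum_range_succ, Finset.sum_range_succ, Finset.sum_range_zero]
      simp
      ring

lemma main_aux (t t' : ℝ) (ht : 0 < t) (htt' : t ≤ t') (n : ℕ) (hn : 1 ≤ n) (s : ℕ → ℂ)
    (hs : ∀ i j : ℕ, i ≤ j → j < n → (∑ l ∈ Finset.Icc i j, s l) ≠ 0) :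
    (∫ u in simplex n t t', ∏ i : Fin n, (u i : ℂ) ^ (s i.1 - 1)) = rhs t t' s n := by
  induction n, hn using Nat.le_induction generalizing s with
  | base => exact base_case t t' ht htt' s (by simpa using hs 0 0 le_rfl Nat.zero_lt_one)
  | succ n hn IH =>
    obtain ⟨m, rfl⟩ : ∃ m, n = m + 1 := ⟨n - 1, by omega⟩
    have hsN : s (m + 1) ≠ 0 := by simpa using hs (m+1) (m+1) le_rfl (by omega)
    have ht' : (t' : ℂ) ≠ 0 := by exact_mod_cast (lt_of_lt_of_le ht htt').ne'
    have hs1 : ∀ i j : ℕ, i ≤ j → j < m + 1 → (∑ l ∈ Finset.Icc i j, s l) ≠ 0 :=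
      fun i j hij hj => hs i j hij (by omega)
    have hs2 : ∀ i j : ℕ, i ≤ j → j < m + 1 →
        (∑ l ∈ Finset.Icc i j, Function.update s m (s m + s (m + 1)) l) ≠ 0 := by
      intro i j hij hj
      rw [← Finset.Ico_add_one_right_eq_Icc]
      rcases eq_or_lt_of_le (Nat.lt_succ_iff.mp hj) with hjm | hjm
      · subst hjm
        rw [sum_Ico_update_top s j i hij, show j + 2 = j + 1 + 1 from rfl, Finset.Ico_add_one_right_eq_Icc]
        exact hs i (j+1) (by omega) (by omega)
      · rw [sum_Ico_update_lt s m i (j+1) (by omega), Finset.Ico_add_one_right_eq_Icc]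
        exact hs i j hij (by omega)
    rw [step t t' ht htt' m s hsN, IH s hs1, IH _ hs2, rhs_rec t t' ht' m s hs]

/-- For `0 < t ≤ t'` and `s₁,…,sₙ ∈ ℂ` with all partial sums `s_i + ⋯ + s_j` nonzero,
`∫_{t ≤ t₁ ≤ ⋯ ≤ tₙ ≤ t'} t₁^{s₁−1} ⋯ tₙ^{sₙ−1} dt = Σ_{k=0}^{n} (−1)^k ·
(t')^{s_{k+1}+⋯+sₙ}/(s_{k+1}(s_{k+1}+s_{k+2})⋯(s_{k+1}+⋯+sₙ)) ·
t^{s₁+⋯+s_k}/(s_k(s_k+s_{k−1})⋯(s_k+⋯+s₁))`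
(indices `1`-based in the informal formula, `0`-based below). -/
theorem stmt15 (n : ℕ) (hn : 0 < n) (t t' : ℝ) (ht : 0 < t) (htt' : t ≤ t')
    (s : ℕ → ℂ) (hs : ∀ i j : ℕ, i ≤ j → j < n → (∑ l ∈ Finset.Icc i j, s l) ≠ 0) :
    (∫ u in simplex n t t', ∏ i : Fin n, (u i : ℂ) ^ (s i.1 - 1)) =
      ∑ k ∈ Finset.range (n + 1),
        (-1 : ℂ) ^ k *
          ((t' : ℂ) ^ (∑ j ∈ Finset.Ico k n, s j) /
            ∏ j ∈ Finset.Ico k n, ∑ l ∈ Finset.Icc k j, s l) *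
          ((t : ℂ) ^ (∑ j ∈ Finset.range k, s j) /
            ∏ j ∈ Finset.range k, ∑ l ∈ Finset.Icc j (k - 1), s l) :=
  main_aux t t' ht htt' n hn s hs

end Stmt15
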